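/- arXiv:1202.2390 — 2 statements merged into one kernel-verified Lean document; each statement's English description precedes it below -/
import Mathlib

section
/- Let 𝒟 be an inclusion-closed collection of families of nonempty subsets of X, let K ∈ 𝒟 be a closed measurable 𝒟-pullback absorbing set for Φ, and suppose Φ is 𝒟-pullback asymptotically compact in X. Then the unique 𝒟-pullback attractor 𝒜 of Φ satisfies, for all ω₁ ∈ Ω₁ and ω₂ ∈ Ω₂: 𝒜(ω₁,ω₂) = ⋃_{B∈𝒟} Ω(B,ω₁,ω₂). -/
open MeasureTheory Filter Set Topology
open scoped ENNReal

namespace RDS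

/-- A group of transformations of `α` parametrized by `ℝ`. -/
def IsGroupAction {α : Type*} (θ : ℝ → α → α) : Prop :=
  (∀ a, θ 0 a = a) ∧ ∀ s t : ℝ, ∀ a, θ (s + t) a = θ t (θ s a)

variable {Ω₁ Ω₂ X : Type*} [MetricSpace X] [MeasurableSpace X] [MeasurableSpace Ω₂]

/-- A continuous cocycle on `X` over the parametric dynamical systems
`(Ω₁, θ₁)` and `(Ω₂, ℱ₂, P, θ₂)` (Definition 2.1). -/
structure IsCocycle (θ₁ : ℝ → Ω₁ → Ω₁) (θ₂ : ℝ → Ω₂ → Ω₂)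
    (Φ : ℝ → Ω₁ → Ω₂ → X → X) : Prop where
  measurable : ∀ ω₁ : Ω₁,
    Measurable fun p : {t : ℝ // 0 ≤ t} × Ω₂ × X => Φ p.1.1 ω₁ p.2.1 p.2.2
  map_zero : ∀ (ω₁ : Ω₁) (ω₂ : Ω₂) (x : X), Φ 0 ω₁ ω₂ x = x
  cocycle : ∀ t τ : ℝ, 0 ≤ t → 0 ≤ τ → ∀ (ω₁ : Ω₁) (ω₂ : Ω₂) (x : X),
    Φ (t + τ) ω₁ ω₂ x = Φ t (θ₁ τ ω₁) (θ₂ τ ω₂) (Φ τ ω₁ ω₂ x)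
  continuous : ∀ t : ℝ, 0 ≤ t → ∀ (ω₁ : Ω₁) (ω₂ : Ω₂),
    Continuous fun x : X => Φ t ω₁ ω₂ x

/-- A complete orbit of the cocycle `Φ` (Definition 2.9). -/
def IsCompleteOrbit (θ₁ : ℝ → Ω₁ → Ω₁) (θ₂ : ℝ → Ω₂ → Ω₂)
    (Φ : ℝ → Ω₁ → Ω₂ → X → X) (ψ : ℝ → Ω₁ → Ω₂ → X) : Prop :=
  ∀ t τ : ℝ, 0 ≤ t → ∀ (ω₁ : Ω₁) (ω₂ : Ω₂),
    Φ t (θ₁ τ ω₁) (θ₂ τ ω₂) (ψ τ ω₁ ω₂) = ψ (t + τ) ω₁ ω₂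

/-- A `𝒟`-complete orbit of `Φ`. -/
def IsDCompleteOrbit (θ₁ : ℝ → Ω₁ → Ω₁) (θ₂ : ℝ → Ω₂ → Ω₂)
    (Φ : ℝ → Ω₁ → Ω₂ → X → X) (𝒟 : Set (Ω₁ → Ω₂ → Set X))
    (ψ : ℝ → Ω₁ → Ω₂ → X) : Prop :=
  IsCompleteOrbit θ₁ θ₂ Φ ψ ∧
    ∃ D ∈ 𝒟, ∀ (t : ℝ) (ω₁ : Ω₁) (ω₂ : Ω₂), ψ t ω₁ ω₂ ∈ D (θ₁ t ω₁) (θ₂ t ω₂)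

/-- Positive invariance of a family under `Φ`. -/
def PositivelyInvariant (θ₁ : ℝ → Ω₁ → Ω₁) (θ₂ : ℝ → Ω₂ → Ω₂)
    (Φ : ℝ → Ω₁ → Ω₂ → X → X) (B : Ω₁ → Ω₂ → Set X) : Prop :=
  ∀ t : ℝ, 0 ≤ t → ∀ (ω₁ : Ω₁) (ω₂ : Ω₂),
    Φ t ω₁ ω₂ '' B ω₁ ω₂ ⊆ B (θ₁ t ω₁) (θ₂ t ω₂)

/-- Invariance of a family under `Φ`. -/
def Invariant (θ₁ : ℝ → Ω₁ → Ω₁) (θ₂ : ℝ → Ω₂ → Ω₂)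
    (Φ : ℝ → Ω₁ → Ω₂ → X → X) (B : Ω₁ → Ω₂ → Set X) : Prop :=
  ∀ t : ℝ, 0 ≤ t → ∀ (ω₁ : Ω₁) (ω₂ : Ω₂),
    Φ t ω₁ ω₂ '' B ω₁ ω₂ = B (θ₁ t ω₁) (θ₂ t ω₂)

/-- Quasi-invariance of a family under `Φ`. -/
def QuasiInvariant (θ₁ : ℝ → Ω₁ → Ω₁) (θ₂ : ℝ → Ω₂ → Ω₂)
    (Φ : ℝ → Ω₁ → Ω₂ → X → X) (B : Ω₁ → Ω₂ → Set X) : Prop :=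
  ∀ y : Ω₁ → Ω₂ → X, (∀ (ω₁ : Ω₁) (ω₂ : Ω₂), y ω₁ ω₂ ∈ B ω₁ ω₂) →
    ∃ ψ : ℝ → Ω₁ → Ω₂ → X, IsCompleteOrbit θ₁ θ₂ Φ ψ ∧
      (∀ (ω₁ : Ω₁) (ω₂ : Ω₂), ψ 0 ω₁ ω₂ = y ω₁ ω₂) ∧
      ∀ (t : ℝ) (ω₁ : Ω₁) (ω₂ : Ω₂), ψ t ω₁ ω₂ ∈ B (θ₁ t ω₁) (θ₂ t ω₂)

/-- The Ω-limit set of a family `B` (Definition 2.13). -/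
def omegaLimit (θ₁ : ℝ → Ω₁ → Ω₁) (θ₂ : ℝ → Ω₂ → Ω₂)
    (Φ : ℝ → Ω₁ → Ω₂ → X → X) (B : Ω₁ → Ω₂ → Set X) (ω₁ : Ω₁) (ω₂ : Ω₂) : Set X :=
  ⋂ τ ∈ Ici (0 : ℝ), closure (⋃ t ∈ Ici τ,
    Φ t (θ₁ (-t) ω₁) (θ₂ (-t) ω₂) '' B (θ₁ (-t) ω₁) (θ₂ (-t) ω₂))

/-- `𝒟` is a collection of families of nonempty subsets of `X`. -/
def FamiliesOfNonemptySets (𝒟 : Set (Ω₁ → Ω₂ → Set X)) : Prop :=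
  ∀ D ∈ 𝒟, ∀ (ω₁ : Ω₁) (ω₂ : Ω₂), (D ω₁ ω₂).Nonempty

/-- Neighborhood closedness of the collection `𝒟` (Definition 2.5). -/
def NeighborhoodClosed (𝒟 : Set (Ω₁ → Ω₂ → Set X)) : Prop :=
  ∀ D ∈ 𝒟, ∃ ε : ℝ, 0 < ε ∧ ∀ B : Ω₁ → Ω₂ → Set X,
    (∀ (ω₁ : Ω₁) (ω₂ : Ω₂), (B ω₁ ω₂).Nonempty ∧
      B ω₁ ω₂ ⊆ Metric.thickening ε (D ω₁ ω₂)) → B ∈ 𝒟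

/-- Inclusion closedness of the collection `𝒟`. -/
def InclusionClosed (𝒟 : Set (Ω₁ → Ω₂ → Set X)) : Prop :=
  ∀ D ∈ 𝒟, ∀ B : Ω₁ → Ω₂ → Set X,
    (∀ (ω₁ : Ω₁) (ω₂ : Ω₂), (B ω₁ ω₂).Nonempty ∧ B ω₁ ω₂ ⊆ D ω₁ ω₂) → B ∈ 𝒟

/-- `𝒟`-pullback asymptotic compactness of `Φ` (Definition 2.16). -/
def AsymptoticallyCompact (θ₁ : ℝ → Ω₁ → Ω₁) (θ₂ : ℝ → Ω₂ → Ω₂)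
    (Φ : ℝ → Ω₁ → Ω₂ → X → X) (𝒟 : Set (Ω₁ → Ω₂ → Set X)) : Prop :=
  ∀ (ω₁ : Ω₁) (ω₂ : Ω₂), ∀ B ∈ 𝒟, ∀ (t : ℕ → ℝ) (x : ℕ → X),
    Tendsto t atTop atTop →
    (∀ n, x n ∈ B (θ₁ (-t n) ω₁) (θ₂ (-t n) ω₂)) →
    ∃ (φ : ℕ → ℕ) (y : X), StrictMono φ ∧
      Tendsto (fun n => Φ (t (φ n)) (θ₁ (-t (φ n)) ω₁) (θ₂ (-t (φ n)) ω₂) (x (φ n)))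
        atTop (𝓝 y)

/-- The Hausdorff semi-metric `d(C,B) = sup_{x ∈ C} inf_{b ∈ B} d(x,b)`,
valued in `ℝ≥0∞`. -/
noncomputable def hausSemidist (C B : Set X) : ℝ≥0∞ :=
  ⨆ x ∈ C, EMetric.infEdist x B

/-- The family `A` pullback attracts the family `B` under `Φ`. -/
def Attracts (θ₁ : ℝ → Ω₁ → Ω₁) (θ₂ : ℝ → Ω₂ → Ω₂)
    (Φ : ℝ → Ω₁ → Ω₂ → X → X) (B A : Ω₁ → Ω₂ → Set X) : Prop :=
  ∀ (ω₁ : Ω₁) (ω₂ : Ω₂),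
    Tendsto (fun t : ℝ => hausSemidist
        (Φ t (θ₁ (-t) ω₁) (θ₂ (-t) ω₂) '' B (θ₁ (-t) ω₁) (θ₂ (-t) ω₂)) (A ω₁ ω₂))
      atTop (𝓝 0)

/-- A `𝒟`-pullback absorbing set for `Φ` (Definition 2.15). -/
def IsAbsorbingSet (θ₁ : ℝ → Ω₁ → Ω₁) (θ₂ : ℝ → Ω₂ → Ω₂)
    (Φ : ℝ → Ω₁ → Ω₂ → X → X) (𝒟 : Set (Ω₁ → Ω₂ → Set X))
    (K : Ω₁ → Ω₂ → Set X) : Prop :=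
  K ∈ 𝒟 ∧ ∀ (ω₁ : Ω₁) (ω₂ : Ω₂), ∀ B ∈ 𝒟, ∃ T : ℝ, 0 < T ∧ ∀ t : ℝ, T ≤ t →
    Φ t (θ₁ (-t) ω₁) (θ₂ (-t) ω₂) '' B (θ₁ (-t) ω₁) (θ₂ (-t) ω₂) ⊆ K ω₁ ω₂

/-- A closed measurable (w.r.t. the `P`-completion of `ℱ₂`) `𝒟`-pullback
absorbing set for `Φ`. -/
def IsClosedMeasurableAbsorbingSet (θ₁ : ℝ → Ω₁ → Ω₁) (θ₂ : ℝ → Ω₂ → Ω₂)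
    (Φ : ℝ → Ω₁ → Ω₂ → X → X) (P : Measure Ω₂) (𝒟 : Set (Ω₁ → Ω₂ → Set X))
    (K : Ω₁ → Ω₂ → Set X) : Prop :=
  IsAbsorbingSet θ₁ θ₂ Φ 𝒟 K ∧
    (∀ (ω₁ : Ω₁) (ω₂ : Ω₂), IsClosed (K ω₁ ω₂) ∧ (K ω₁ ω₂).Nonempty) ∧
    ∀ (ω₁ : Ω₁) (x : X), NullMeasurable (fun ω₂ => Metric.infDist x (K ω₁ ω₂)) P

/-- A `𝒟`-pullback attractor for `Φ` (Definition 2.17). -/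
structure IsPullbackAttractor (θ₁ : ℝ → Ω₁ → Ω₁) (θ₂ : ℝ → Ω₂ → Ω₂)
    (Φ : ℝ → Ω₁ → Ω₂ → X → X) (P : Measure Ω₂) (𝒟 : Set (Ω₁ → Ω₂ → Set X))
    (A : Ω₁ → Ω₂ → Set X) : Prop where
  mem : A ∈ 𝒟
  compact : ∀ (ω₁ : Ω₁) (ω₂ : Ω₂), IsCompact (A ω₁ ω₂)
  measurable : ∀ (ω₁ : Ω₁) (x : X),
    NullMeasurable (fun ω₂ => Metric.infDist x (A ω₁ ω₂)) P
  invariant : Invariant θ₁ θ₂ Φ A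
  attracts : ∀ B ∈ 𝒟, Attracts θ₁ θ₂ Φ B A

theorem attractor_eq_union_omegaLimits
    {Ω₁ Ω₂ X : Type*} [Nonempty Ω₁]
    [MetricSpace X] [CompleteSpace X] [SecondCountableTopology X]
    [MeasurableSpace X] [BorelSpace X]
    [MeasurableSpace Ω₂] (P : Measure Ω₂) [IsProbabilityMeasure P]
    (θ₁ : ℝ → Ω₁ → Ω₁) (θ₂ : ℝ → Ω₂ → Ω₂)
    (hθ₁ : IsGroupAction θ₁) (hθ₂ : IsGroupAction θ₂)
    (hθ₂meas : Measurable fun p : ℝ × Ω₂ => θ₂ p.1 p.2)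
    (hθ₂pres : ∀ t : ℝ, MeasurePreserving (θ₂ t) P P)
    (Φ : ℝ → Ω₁ → Ω₂ → X → X)
    (hΦ : IsCocycle θ₁ θ₂ Φ)
    (𝒟 : Set (Ω₁ → Ω₂ → Set X))
    (h𝒟ne : FamiliesOfNonemptySets 𝒟)
    (h𝒟ic : InclusionClosed 𝒟)
    (K : Ω₁ → Ω₂ → Set X)
    (hK : IsClosedMeasurableAbsorbingSet θ₁ θ₂ Φ P 𝒟 K)
    (hac : AsymptoticallyCompact θ₁ θ₂ Φ 𝒟) :
    ∀ A : Ω₁ → Ω₂ → Set X, IsPullbackAttractor θ₁ θ₂ Φ P 𝒟 A →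
      ∀ (ω₁ : Ω₁) (ω₂ : Ω₂), A ω₁ ω₂ = ⋃ B ∈ 𝒟, omegaLimit θ₁ θ₂ Φ B ω₁ ω₂ := by
  intro A hA ω₁ ω₂
  have hgrp₁ : ∀ (t : ℝ) (a : Ω₁), θ₁ t (θ₁ (-t) a) = a := by
    intro t a
    have h := hθ₁.2 (-t) t a
    rw [neg_add_cancel, hθ₁.1] at h
    exact h.symm
  have hgrp₂ : ∀ (t : ℝ) (a : Ω₂), θ₂ t (θ₂ (-t) a) = a := by
    intro t a
    have h := hθ₂.2 (-t) t a
    rw [neg_add_cancel, hθ₂.1] at h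
    exact h.symm
  apply Subset.antisymm
  · intro x hx
    refine mem_iUnion₂.mpr ⟨A, hA.mem, ?_⟩
    simp only [omegaLimit, mem_iInter, mem_Ici]
    intro τ hτ
    apply subset_closure
    refine mem_iUnion₂.mpr ⟨max τ 0, le_max_left _ _, ?_⟩
    have ht0 : (0 : ℝ) ≤ max τ 0 := le_max_right _ _
    have hinv := hA.invariant (max τ 0) ht0 (θ₁ (-(max τ 0)) ω₁) (θ₂ (-(max τ 0)) ω₂)
    rw [hgrp₁, hgrp₂] at hinv
    rw [hinv]
    exact hx
  · intro x hx
    obtain ⟨B, hB, hxB⟩ := mem_iUnion₂.mp hx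
    simp only [omegaLimit, mem_iInter, mem_Ici] at hxB
    have key : ∀ n : ℕ, ∃ t : ℝ, (n : ℝ) ≤ t ∧ ∃ y ∈ Φ t (θ₁ (-t) ω₁) (θ₂ (-t) ω₂) ''
        B (θ₁ (-t) ω₁) (θ₂ (-t) ω₂), dist x y < 1 / (n + 1) := by
      intro n
      have hxn := hxB (n : ℝ) (Nat.cast_nonneg n)
      have hpos : (0 : ℝ) < 1 / (n + 1) := by positivity
      obtain ⟨y, hy, hdy⟩ := Metric.mem_closure_iff.mp hxn _ hpos
      obtain ⟨t, ht, hyt⟩ := mem_iUnion₂.mp hy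
      exact ⟨t, ht, y, hyt, hdy⟩
    choose t ht y hy hdy using key
    -- t tends to infinity
    have htend : Tendsto t atTop atTop :=
      tendsto_atTop_mono ht tendsto_natCast_atTop_atTop
    -- the Hausdorff semidistance tends to 0 along t
    have hatt : Tendsto (fun n => hausSemidist
        (Φ (t n) (θ₁ (-(t n)) ω₁) (θ₂ (-(t n)) ω₂) ''
          B (θ₁ (-(t n)) ω₁) (θ₂ (-(t n)) ω₂)) (A ω₁ ω₂)) atTop (𝓝 0) :=
      (hA.attracts B hB ω₁ ω₂).comp htend
    -- y tends to x
    have hytend : Tendsto y atTop (𝓝 x) := by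
      rw [tendsto_iff_dist_tendsto_zero]
      apply squeeze_zero (fun n => dist_nonneg) (fun n => (dist_comm (y n) x ▸ (hdy n).le))
      exact tendsto_one_div_add_atTop_nhds_zero_nat
    have hedist : Tendsto (fun n => edist x (y n)) atTop (𝓝 0) := by
      have := (tendsto_const_nhds (x := x) (f := atTop (α := ℕ))).edist hytend
      rwa [edist_self] at this
    -- bound infEdist x (A ω₁ ω₂)
    have hbound : ∀ n, EMetric.infEdist x (A ω₁ ω₂) ≤
        hausSemidist (Φ (t n) (θ₁ (-(t n)) ω₁) (θ₂ (-(t n)) ω₂) ''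
          B (θ₁ (-(t n)) ω₁) (θ₂ (-(t n)) ω₂)) (A ω₁ ω₂) + edist x (y n) := by
      intro n
      calc EMetric.infEdist x (A ω₁ ω₂)
          ≤ EMetric.infEdist (y n) (A ω₁ ω₂) + edist x (y n) :=
            EMetric.infEdist_le_infEdist_add_edist
        _ ≤ _ := by
            gcongr
            exact le_iSup₂ (f := fun z (_ : z ∈ Φ (t n) (θ₁ (-(t n)) ω₁) (θ₂ (-(t n)) ω₂) ''
              B (θ₁ (-(t n)) ω₁) (θ₂ (-(t n)) ω₂)) => EMetric.infEdist z (A ω₁ ω₂)) (y n) (hy n)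
    have hsum : Tendsto (fun n => hausSemidist
        (Φ (t n) (θ₁ (-(t n)) ω₁) (θ₂ (-(t n)) ω₂) ''
          B (θ₁ (-(t n)) ω₁) (θ₂ (-(t n)) ω₂)) (A ω₁ ω₂) + edist x (y n)) atTop (𝓝 0) := by
      have := hatt.add hedist
      simpa using this
    have hzero : EMetric.infEdist x (A ω₁ ω₂) = 0 := by
      have hle : EMetric.infEdist x (A ω₁ ω₂) ≤ 0 :=
        le_of_tendsto_of_tendsto' tendsto_const_nhds hsum hbound
      exact le_antisymm hle zero_le
    have hxcl : x ∈ closure (A ω₁ ω₂) := EMetric.mem_closure_iff_infEdist_zero.mpr hzero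
    rwa [(hA.compact ω₁ ω₂).isClosed.closure_eq] at hxcl


end RDS
end

section
/- (Main Theorem.) Let 𝒟 be a neighborhood closed collection of families of nonempty subsets of X. Then Φ has a 𝒟-pullback attractor 𝒜 in 𝒟 if and only if Φ is 𝒟-pullback asymptotically compact in X and Φ has a closed measurable 𝒟-pullback absorbing set K in 𝒟. In this case the 𝒟-pullback attractor is unique and is given, for each ω₁ ∈ Ω₁ and ω₂ ∈ Ω₂, by 𝒜(ω₁,ω₂) = Ω(K,ω₁,ω₂) = ⋃_{B∈𝒟} Ω(B,ω₁,ω₂) = { ψ(0,ω₁,ω₂) : ψ is a 𝒟-complete orbit of Φ }. -/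
open MeasureTheory Filter Set Topology
open scoped ENNReal

namespace RDS

variable {Ω₁ Ω₂ X : Type*} [MetricSpace X] [MeasurableSpace X] [MeasurableSpace Ω₂]

section Aux
set_option linter.unusedSectionVars false

variable {Ω₁ Ω₂ X : Type*} [MetricSpace X] [MeasurableSpace X] [MeasurableSpace Ω₂]
variable {θ₁ : ℝ → Ω₁ → Ω₁} {θ₂ : ℝ → Ω₂ → Ω₂} {Φ : ℝ → Ω₁ → Ω₂ → X → X}
variable {𝒟 : Set (Ω₁ → Ω₂ → Set X)}

theorem ga_comp {α : Type*} {θ : ℝ → α → α} (h : IsGroupAction θ) (s t : ℝ) (a : α) :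
    θ t (θ s a) = θ (s + t) a := (h.2 s t a).symm

theorem ga_cancel {α : Type*} {θ : ℝ → α → α} (h : IsGroupAction θ) (t : ℝ) (a : α) :
    θ t (θ (-t) a) = a := by rw [ga_comp h, neg_add_cancel, h.1]

theorem ga_cancel' {α : Type*} {θ : ℝ → α → α} (h : IsGroupAction θ) (t : ℝ) (a : α) :
    θ (-t) (θ t a) = a := by rw [ga_comp h, add_neg_cancel, h.1]

/-- The pullback image family. -/
def pull (θ₁ : ℝ → Ω₁ → Ω₁) (θ₂ : ℝ → Ω₂ → Ω₂) (Φ : ℝ → Ω₁ → Ω₂ → X → X)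
    (B : Ω₁ → Ω₂ → Set X) (t : ℝ) (ω₁ : Ω₁) (ω₂ : Ω₂) : Set X :=
  Φ t (θ₁ (-t) ω₁) (θ₂ (-t) ω₂) '' B (θ₁ (-t) ω₁) (θ₂ (-t) ω₂)

theorem omegaLimit_eq (B : Ω₁ → Ω₂ → Set X) (ω₁ : Ω₁) (ω₂ : Ω₂) :
    omegaLimit θ₁ θ₂ Φ B ω₁ ω₂
      = ⋂ τ ∈ Ici (0 : ℝ), closure (⋃ t ∈ Ici τ, pull θ₁ θ₂ Φ B t ω₁ ω₂) := rfl

theorem pull_add (hθ₁ : IsGroupAction θ₁) (hθ₂ : IsGroupAction θ₂) (hΦ : IsCocycle θ₁ θ₂ Φ)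
    (B : Ω₁ → Ω₂ → Set X) {τ s : ℝ} (hτ : 0 ≤ τ) (hs : 0 ≤ s) (ω₁ : Ω₁) (ω₂ : Ω₂) :
    pull θ₁ θ₂ Φ B (τ + s) ω₁ ω₂
      = Φ τ (θ₁ (-τ) ω₁) (θ₂ (-τ) ω₂) ''
          pull θ₁ θ₂ Φ B s (θ₁ (-τ) ω₁) (θ₂ (-τ) ω₂) := by
  have h1 : θ₁ (-s) (θ₁ (-τ) ω₁) = θ₁ (-(τ + s)) ω₁ := by
    rw [ga_comp hθ₁]; ring_nf
  have h2 : θ₂ (-s) (θ₂ (-τ) ω₂) = θ₂ (-(τ + s)) ω₂ := by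
    rw [ga_comp hθ₂]; ring_nf
  have h3 : θ₁ s (θ₁ (-(τ + s)) ω₁) = θ₁ (-τ) ω₁ := by
    rw [ga_comp hθ₁]; ring_nf
  have h4 : θ₂ s (θ₂ (-(τ + s)) ω₂) = θ₂ (-τ) ω₂ := by
    rw [ga_comp hθ₂]; ring_nf
  unfold pull
  rw [h1, h2, ← Set.image_comp]
  apply Set.image_congr
  intro x _
  have := hΦ.cocycle τ s hτ hs (θ₁ (-(τ + s)) ω₁) (θ₂ (-(τ + s)) ω₂) x
  rw [Function.comp_apply, this, h3, h4]

theorem pull_invariant (hθ₁ : IsGroupAction θ₁) (hθ₂ : IsGroupAction θ₂)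
    {A : Ω₁ → Ω₂ → Set X} (hA : Invariant θ₁ θ₂ Φ A) {t : ℝ} (ht : 0 ≤ t)
    (ω₁ : Ω₁) (ω₂ : Ω₂) : pull θ₁ θ₂ Φ A t ω₁ ω₂ = A ω₁ ω₂ := by
  unfold pull
  rw [hA t ht, ga_cancel hθ₁, ga_cancel hθ₂]

theorem mem_omegaLimit_of_tendsto {B : Ω₁ → Ω₂ → Set X} {ω₁ : Ω₁} {ω₂ : Ω₂} {y : X}
    (t : ℕ → ℝ) (x : ℕ → X) (ht : Tendsto t atTop atTop)
    (hx : ∀ n, x n ∈ B (θ₁ (-t n) ω₁) (θ₂ (-t n) ω₂))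
    (hy : Tendsto (fun n => Φ (t n) (θ₁ (-t n) ω₁) (θ₂ (-t n) ω₂) (x n)) atTop (𝓝 y)) :
    y ∈ omegaLimit θ₁ θ₂ Φ B ω₁ ω₂ := by
  rw [omegaLimit_eq]
  refine Set.mem_iInter₂.2 fun τ _ => ?_
  refine mem_closure_of_tendsto hy ?_
  filter_upwards [ht.eventually_ge_atTop τ] with n hn
  exact Set.mem_biUnion hn ⟨x n, hx n, rfl⟩

theorem exists_approx_of_mem_omegaLimit {B : Ω₁ → Ω₂ → Set X} {ω₁ : Ω₁} {ω₂ : Ω₂} {y : X}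
    (hy : y ∈ omegaLimit θ₁ θ₂ Φ B ω₁ ω₂) {τ : ℝ} (hτ : 0 ≤ τ) {δ : ℝ} (hδ : 0 < δ) :
    ∃ t : ℝ, τ ≤ t ∧ ∃ x ∈ B (θ₁ (-t) ω₁) (θ₂ (-t) ω₂),
      dist (Φ t (θ₁ (-t) ω₁) (θ₂ (-t) ω₂) x) y < δ := by
  rw [omegaLimit_eq] at hy
  have h1 : y ∈ closure (⋃ t ∈ Ici τ, pull θ₁ θ₂ Φ B t ω₁ ω₂) :=
    Set.mem_iInter₂.1 hy τ hτ
  obtain ⟨b, hb, hbd⟩ := Metric.mem_closure_iff.1 h1 δ hδ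
  obtain ⟨t, htτ, hbt⟩ := Set.mem_iUnion₂.1 hb
  obtain ⟨x, hxB, rfl⟩ := hbt
  exact ⟨t, htτ, x, hxB, by rwa [dist_comm]⟩

theorem exists_seq_of_mem_omegaLimit {B : Ω₁ → Ω₂ → Set X} {ω₁ : Ω₁} {ω₂ : Ω₂} {y : X}
    (hy : y ∈ omegaLimit θ₁ θ₂ Φ B ω₁ ω₂) :
    ∃ (t : ℕ → ℝ) (x : ℕ → X), (∀ n : ℕ, (n : ℝ) ≤ t n) ∧
      (∀ n, x n ∈ B (θ₁ (-t n) ω₁) (θ₂ (-t n) ω₂)) ∧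
      Tendsto (fun n => Φ (t n) (θ₁ (-t n) ω₁) (θ₂ (-t n) ω₂) (x n)) atTop (𝓝 y) := by
  have H : ∀ n : ℕ, ∃ t : ℝ, (n : ℝ) ≤ t ∧ ∃ x ∈ B (θ₁ (-t) ω₁) (θ₂ (-t) ω₂),
      dist (Φ t (θ₁ (-t) ω₁) (θ₂ (-t) ω₂) x) y < 1 / (n + 1) := fun n =>
    exists_approx_of_mem_omegaLimit hy (Nat.cast_nonneg n) (by positivity)
  choose t ht hx using H
  choose x hxB hdist using hx
  refine ⟨t, x, ht, hxB, ?_⟩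
  rw [tendsto_iff_dist_tendsto_zero]
  refine squeeze_zero (fun n => dist_nonneg) (fun n => (hdist n).le) ?_
  exact tendsto_one_div_add_atTop_nhds_zero_nat

theorem tendsto_t_atTop {t : ℕ → ℝ} (ht : ∀ n : ℕ, (n : ℝ) ≤ t n) : Tendsto t atTop atTop :=
  tendsto_atTop_mono ht tendsto_natCast_atTop_atTop

theorem isClosed_omegaLimit (B : Ω₁ → Ω₂ → Set X) (ω₁ : Ω₁) (ω₂ : Ω₂) :
    IsClosed (omegaLimit θ₁ θ₂ Φ B ω₁ ω₂) :=
  isClosed_biInter fun _ _ => isClosed_closure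

theorem omegaLimit_subset_absorbing (hK : IsAbsorbingSet θ₁ θ₂ Φ 𝒟 K)
    (hKcl : IsClosed (K ω₁ ω₂)) : omegaLimit θ₁ θ₂ Φ K ω₁ ω₂ ⊆ K ω₁ ω₂ := by
  obtain ⟨T, hT, habs⟩ := hK.2 ω₁ ω₂ K hK.1
  intro y hy
  rw [omegaLimit_eq] at hy
  have h1 : y ∈ closure (⋃ t ∈ Ici T, pull θ₁ θ₂ Φ K t ω₁ ω₂) :=
    Set.mem_iInter₂.1 hy T hT.le
  refine hKcl.closure_subset (closure_mono ?_ h1)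
  exact Set.iUnion₂_subset fun s hs => habs s hs

theorem ga_eq {α : Type*} {θ : ℝ → α → α} (h : IsGroupAction θ) {a b c : ℝ}
    (hc : a + b = c) (ω : α) : θ b (θ a ω) = θ c ω := by rw [ga_comp h, hc]

theorem omegaLimit_subset_omegaLimit (hθ₁ : IsGroupAction θ₁) (hθ₂ : IsGroupAction θ₂)
    (hΦ : IsCocycle θ₁ θ₂ Φ) {B K : Ω₁ → Ω₂ → Set X} (hB : B ∈ 𝒟)
    (hK : IsAbsorbingSet θ₁ θ₂ Φ 𝒟 K) (ω₁ : Ω₁) (ω₂ : Ω₂) :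
    omegaLimit θ₁ θ₂ Φ B ω₁ ω₂ ⊆ omegaLimit θ₁ θ₂ Φ K ω₁ ω₂ := by
  intro y hy
  obtain ⟨t, x, htn, hxB, hconv⟩ := exists_seq_of_mem_omegaLimit hy
  rw [omegaLimit_eq]
  refine Set.mem_iInter₂.2 fun τ hτ => ?_
  obtain ⟨T, hT, habs⟩ := hK.2 (θ₁ (-τ) ω₁) (θ₂ (-τ) ω₂) B hB
  refine mem_closure_of_tendsto hconv ?_
  filter_upwards [(tendsto_t_atTop htn).eventually_ge_atTop (τ + T)] with n hn
  set s := t n - τ with hs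
  have hsT : T ≤ s := by rw [hs]; linarith
  have hs0 : 0 ≤ s := le_trans hT.le hsT
  have e1 : θ₁ (-s) (θ₁ (-τ) ω₁) = θ₁ (-t n) ω₁ := ga_eq hθ₁ (by rw [hs]; ring) ω₁
  have e2 : θ₂ (-s) (θ₂ (-τ) ω₂) = θ₂ (-t n) ω₂ := ga_eq hθ₂ (by rw [hs]; ring) ω₂
  have e3 : θ₁ s (θ₁ (-t n) ω₁) = θ₁ (-τ) ω₁ := ga_eq hθ₁ (by rw [hs]; ring) ω₁
  have e4 : θ₂ s (θ₂ (-t n) ω₂) = θ₂ (-τ) ω₂ := ga_eq hθ₂ (by rw [hs]; ring) ω₂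
  have hzK : Φ s (θ₁ (-t n) ω₁) (θ₂ (-t n) ω₂) (x n)
      ∈ K (θ₁ (-τ) ω₁) (θ₂ (-τ) ω₂) := by
    have := habs s hsT
    rw [e1, e2] at this
    exact this ⟨x n, hxB n, rfl⟩
  have hc := hΦ.cocycle τ s hτ hs0 (θ₁ (-t n) ω₁) (θ₂ (-t n) ω₂) (x n)
  rw [e3, e4] at hc
  have h5 : τ + s = t n := by rw [hs]; ring
  rw [h5] at hc
  refine Set.mem_biUnion (Set.self_mem_Ici) ?_
  rw [hc]
  exact ⟨_, hzK, rfl⟩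

theorem omegaLimit_nonempty (h𝒟ne : FamiliesOfNonemptySets 𝒟)
    (hAC : AsymptoticallyCompact θ₁ θ₂ Φ 𝒟) {B : Ω₁ → Ω₂ → Set X} (hB : B ∈ 𝒟)
    (ω₁ : Ω₁) (ω₂ : Ω₂) : (omegaLimit θ₁ θ₂ Φ B ω₁ ω₂).Nonempty := by
  have hx : ∀ n : ℕ, ∃ z, z ∈ B (θ₁ (-((n : ℕ) : ℝ)) ω₁) (θ₂ (-((n : ℕ) : ℝ)) ω₂) :=
    fun n => h𝒟ne B hB _ _
  choose x hx using hx
  obtain ⟨φ, y, hφ, hconv⟩ := hAC ω₁ ω₂ B hB (fun n => (n : ℝ)) x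
    tendsto_natCast_atTop_atTop hx
  refine ⟨y, mem_omegaLimit_of_tendsto (fun n => ((φ n : ℕ) : ℝ)) (fun n => x (φ n))
    (tendsto_natCast_atTop_atTop.comp hφ.tendsto_atTop) (fun n => hx (φ n)) hconv⟩

theorem isCompact_omegaLimit (hAC : AsymptoticallyCompact θ₁ θ₂ Φ 𝒟)
    {B : Ω₁ → Ω₂ → Set X} (hB : B ∈ 𝒟) (ω₁ : Ω₁) (ω₂ : Ω₂) :
    IsCompact (omegaLimit θ₁ θ₂ Φ B ω₁ ω₂) := by
  rw [isCompact_iff_isSeqCompact]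
  intro y hy
  have H : ∀ k : ℕ, ∃ t : ℝ, (k : ℝ) ≤ t ∧ ∃ z ∈ B (θ₁ (-t) ω₁) (θ₂ (-t) ω₂),
      dist (Φ t (θ₁ (-t) ω₁) (θ₂ (-t) ω₂) z) (y k) < 1 / (k + 1) := fun k =>
    exists_approx_of_mem_omegaLimit (hy k) (Nat.cast_nonneg k) (by positivity)
  choose t ht hz using H
  choose z hzB hdist using hz
  obtain ⟨φ, a, hφ, hconv⟩ := hAC ω₁ ω₂ B hB t z (tendsto_t_atTop ht) hzB
  have htφ : ∀ n : ℕ, (n : ℝ) ≤ t (φ n) := fun n =>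
    le_trans (Nat.cast_le.2 hφ.le_apply) (ht (φ n))
  refine ⟨a, mem_omegaLimit_of_tendsto _ _ (tendsto_t_atTop htφ)
    (fun n => hzB (φ n)) hconv, φ, hφ, ?_⟩
  rw [tendsto_iff_dist_tendsto_zero]
  have hle : ∀ n : ℕ, dist ((y ∘ φ) n) a ≤ 1 / (φ n + 1)
      + dist (Φ (t (φ n)) (θ₁ (-t (φ n)) ω₁) (θ₂ (-t (φ n)) ω₂) (z (φ n))) a := by
    intro n
    calc dist (y (φ n)) a ≤ dist (y (φ n))
          (Φ (t (φ n)) (θ₁ (-t (φ n)) ω₁) (θ₂ (-t (φ n)) ω₂) (z (φ n)))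
          + dist (Φ (t (φ n)) (θ₁ (-t (φ n)) ω₁) (θ₂ (-t (φ n)) ω₂) (z (φ n))) a :=
        dist_triangle _ _ _
      _ ≤ _ := by
        rw [dist_comm (y (φ n))]
        exact add_le_add (hdist (φ n)).le le_rfl
  refine squeeze_zero (fun n => dist_nonneg) hle ?_
  have h1 : Tendsto (fun n : ℕ => 1 / ((φ n : ℝ) + 1)) atTop (𝓝 0) :=
    tendsto_one_div_add_atTop_nhds_zero_nat.comp hφ.tendsto_atTop
  have h2 : Tendsto (fun n : ℕ =>
      dist (Φ (t (φ n)) (θ₁ (-t (φ n)) ω₁) (θ₂ (-t (φ n)) ω₂) (z (φ n))) a) atTop (𝓝 0) :=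
    tendsto_iff_dist_tendsto_zero.1 hconv
  simpa using h1.add h2

theorem attracts_omegaLimit (hθ₁ : IsGroupAction θ₁) (hθ₂ : IsGroupAction θ₂)
    (hΦ : IsCocycle θ₁ θ₂ Φ) (hAC : AsymptoticallyCompact θ₁ θ₂ Φ 𝒟)
    {K : Ω₁ → Ω₂ → Set X} (hK : IsAbsorbingSet θ₁ θ₂ Φ 𝒟 K)
    {B : Ω₁ → Ω₂ → Set X} (hB : B ∈ 𝒟) :
    Attracts θ₁ θ₂ Φ B (fun a b => omegaLimit θ₁ θ₂ Φ K a b) := by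
  intro ω₁ ω₂
  by_contra hcon
  rw [ENNReal.tendsto_nhds_zero] at hcon
  push_neg at hcon
  obtain ⟨ε, hε, hfreq⟩ := hcon
  have hfreq' := Filter.frequently_atTop.1 hfreq
  have H : ∀ n : ℕ, ∃ t : ℝ, (n : ℝ) ≤ t ∧ ∃ x ∈ B (θ₁ (-t) ω₁) (θ₂ (-t) ω₂),
      ε < EMetric.infEdist (Φ t (θ₁ (-t) ω₁) (θ₂ (-t) ω₂) x)
        (omegaLimit θ₁ θ₂ Φ K ω₁ ω₂) := by
    intro n
    obtain ⟨b, hb, hlt⟩ := hfreq' (n : ℝ)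
    rw [hausSemidist, lt_iSup_iff] at hlt
    obtain ⟨u, hu⟩ := hlt
    rw [lt_iSup_iff] at hu
    obtain ⟨hu_mem, hu_lt⟩ := hu
    obtain ⟨x, hxB, rfl⟩ := hu_mem
    exact ⟨b, hb, x, hxB, hu_lt⟩
  choose t htn x hxB hlt using H
  obtain ⟨φ, y, hφ, hconv⟩ := hAC ω₁ ω₂ B hB t x (tendsto_t_atTop htn) hxB
  have hyΩ : y ∈ omegaLimit θ₁ θ₂ Φ K ω₁ ω₂ := by
    refine omegaLimit_subset_omegaLimit hθ₁ hθ₂ hΦ hB hK ω₁ ω₂ ?_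
    exact mem_omegaLimit_of_tendsto _ _
      (tendsto_t_atTop fun n => le_trans (Nat.cast_le.2 hφ.le_apply) (htn (φ n)))
      (fun n => hxB (φ n)) hconv
  have h0 : EMetric.infEdist y (omegaLimit θ₁ θ₂ Φ K ω₁ ω₂) = 0 :=
    EMetric.infEdist_zero_of_mem hyΩ
  have hcont : Tendsto (fun n => EMetric.infEdist
      (Φ (t (φ n)) (θ₁ (-t (φ n)) ω₁) (θ₂ (-t (φ n)) ω₂) (x (φ n)))
      (omegaLimit θ₁ θ₂ Φ K ω₁ ω₂)) atTop
      (𝓝 (EMetric.infEdist y (omegaLimit θ₁ θ₂ Φ K ω₁ ω₂))) :=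
    (EMetric.continuous_infEdist.tendsto y).comp hconv
  have : ε ≤ EMetric.infEdist y (omegaLimit θ₁ θ₂ Φ K ω₁ ω₂) :=
    ge_of_tendsto hcont (Filter.Eventually.of_forall fun n => (hlt (φ n)).le)
  rw [h0] at this
  exact absurd this (not_le.2 hε)

theorem invariant_omegaLimit (hθ₁ : IsGroupAction θ₁) (hθ₂ : IsGroupAction θ₂)
    (hΦ : IsCocycle θ₁ θ₂ Φ) (hAC : AsymptoticallyCompact θ₁ θ₂ Φ 𝒟)
    {K : Ω₁ → Ω₂ → Set X} (hK𝒟 : K ∈ 𝒟) :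
    Invariant θ₁ θ₂ Φ (fun a b => omegaLimit θ₁ θ₂ Φ K a b) := by
  intro t ht ω₁ ω₂
  apply Set.Subset.antisymm
  · rintro _ ⟨y, hy, rfl⟩
    obtain ⟨s, x, hsn, hxK, hconv⟩ := exists_seq_of_mem_omegaLimit hy
    have hs0 : ∀ n : ℕ, 0 ≤ s n := fun n => le_trans (Nat.cast_nonneg n) (hsn n)
    have e1 : ∀ n, θ₁ (-(t + s n)) (θ₁ t ω₁) = θ₁ (-s n) ω₁ :=
      fun n => ga_eq hθ₁ (by ring) ω₁
    have e2 : ∀ n, θ₂ (-(t + s n)) (θ₂ t ω₂) = θ₂ (-s n) ω₂ :=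
      fun n => ga_eq hθ₂ (by ring) ω₂
    refine mem_omegaLimit_of_tendsto (fun n => t + s n) x
      (tendsto_atTop_add_const_left _ t (tendsto_t_atTop hsn)) ?_ ?_
    · intro n; rw [e1, e2]; exact hxK n
    · have key : ∀ n, Φ (t + s n) (θ₁ (-(t + s n)) (θ₁ t ω₁)) (θ₂ (-(t + s n)) (θ₂ t ω₂)) (x n)
          = Φ t ω₁ ω₂ (Φ (s n) (θ₁ (-s n) ω₁) (θ₂ (-s n) ω₂) (x n)) := by
        intro n
        rw [e1, e2]
        have hc := hΦ.cocycle t (s n) ht (hs0 n) (θ₁ (-s n) ω₁) (θ₂ (-s n) ω₂) (x n)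
        rwa [ga_cancel hθ₁, ga_cancel hθ₂] at hc
      have h1 : Tendsto (fun n => Φ t ω₁ ω₂
          (Φ (s n) (θ₁ (-s n) ω₁) (θ₂ (-s n) ω₂) (x n))) atTop (𝓝 (Φ t ω₁ ω₂ y)) :=
        ((hΦ.continuous t ht ω₁ ω₂).tendsto y).comp hconv
      exact h1.congr fun n => (key n).symm
  · intro y hy
    obtain ⟨s, x, hsn, hxK, hconv⟩ := exists_seq_of_mem_omegaLimit hy
    set N := ⌈t⌉₊ with hN
    have hNt : t ≤ (N : ℝ) := Nat.le_ceil t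
    set s' : ℕ → ℝ := fun n => s (n + N) - t with hs'
    set x' : ℕ → X := fun n => x (n + N) with hx'
    have hs'n : ∀ n : ℕ, (n : ℝ) ≤ s' n := by
      intro n
      have := hsn (n + N)
      have : ((n : ℝ) + N) ≤ s (n + N) := by push_cast at this ⊢; linarith
      simp only [hs']; linarith
    have hs'0 : ∀ n : ℕ, 0 ≤ s' n := fun n => le_trans (Nat.cast_nonneg n) (hs'n n)
    have e1 : ∀ n, θ₁ (-s (n + N)) (θ₁ t ω₁) = θ₁ (-(s' n)) ω₁ :=
      fun n => ga_eq hθ₁ (by simp only [hs']; ring) ω₁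
    have e2 : ∀ n, θ₂ (-s (n + N)) (θ₂ t ω₂) = θ₂ (-(s' n)) ω₂ :=
      fun n => ga_eq hθ₂ (by simp only [hs']; ring) ω₂
    have hmem' : ∀ n, x' n ∈ K (θ₁ (-(s' n)) ω₁) (θ₂ (-(s' n)) ω₂) := by
      intro n
      have := hxK (n + N)
      rwa [e1, e2] at this
    obtain ⟨φ, z, hφ, hconvz⟩ := hAC ω₁ ω₂ K hK𝒟 s' x' (tendsto_t_atTop hs'n) hmem'
    have hz : z ∈ omegaLimit θ₁ θ₂ Φ K ω₁ ω₂ :=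
      mem_omegaLimit_of_tendsto _ _
        (tendsto_t_atTop fun n => le_trans (Nat.cast_le.2 hφ.le_apply) (hs'n (φ n)))
        (fun n => hmem' (φ n)) hconvz
    refine ⟨z, hz, ?_⟩
    have key : ∀ n, Φ t ω₁ ω₂
        (Φ (s' (φ n)) (θ₁ (-(s' (φ n))) ω₁) (θ₂ (-(s' (φ n))) ω₂) (x' (φ n)))
        = Φ (s (φ n + N)) (θ₁ (-s (φ n + N)) (θ₁ t ω₁)) (θ₂ (-s (φ n + N)) (θ₂ t ω₂))
            (x (φ n + N)) := by
      intro n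
      rw [e1, e2]
      have hc := hΦ.cocycle t (s' (φ n)) ht (hs'0 (φ n))
        (θ₁ (-(s' (φ n))) ω₁) (θ₂ (-(s' (φ n))) ω₂) (x' (φ n))
      rw [ga_cancel hθ₁, ga_cancel hθ₂] at hc
      have harg : t + s' (φ n) = s (φ n + N) := by simp only [hs']; ring
      rw [harg] at hc
      exact hc.symm
    have h1 : Tendsto (fun n => Φ t ω₁ ω₂
        (Φ (s' (φ n)) (θ₁ (-(s' (φ n))) ω₁) (θ₂ (-(s' (φ n))) ω₂) (x' (φ n)))) atTop
        (𝓝 (Φ t ω₁ ω₂ z)) := ((hΦ.continuous t ht ω₁ ω₂).tendsto z).comp hconvz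
    have h2 : Tendsto (fun n => Φ (s (φ n + N)) (θ₁ (-s (φ n + N)) (θ₁ t ω₁))
        (θ₂ (-s (φ n + N)) (θ₂ t ω₂)) (x (φ n + N))) atTop (𝓝 y) :=
      hconv.comp ((tendsto_add_atTop_nat N).comp hφ.tendsto_atTop)
    exact tendsto_nhds_unique (h1.congr key) h2

theorem le_hausSemidist {C B : Set X} {z : X} (hz : z ∈ C) :
    EMetric.infEdist z B ≤ hausSemidist C B :=
  le_iSup₂ (f := fun x (_ : x ∈ C) => EMetric.infEdist x B) z hz

theorem infEdist_eq_zero_forall {y : X} {A : Set X}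
    (h : ∀ ε : ℝ≥0∞, 0 < ε → EMetric.infEdist y A ≤ ε) :
    EMetric.infEdist y A = 0 := by
  refine le_antisymm ?_ zero_le
  refine ENNReal.le_of_forall_pos_le_add fun ε hε _ => ?_
  rw [zero_add]
  exact h ε (by exact_mod_cast hε)

theorem omegaLimit_subset_of_attracts {A B : Ω₁ → Ω₂ → Set X}
    (hAcl : ∀ a b, IsClosed (A a b)) (hatt : Attracts θ₁ θ₂ Φ B A)
    (ω₁ : Ω₁) (ω₂ : Ω₂) : omegaLimit θ₁ θ₂ Φ B ω₁ ω₂ ⊆ A ω₁ ω₂ := by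
  intro y hy
  obtain ⟨t, x, htn, hxB, hconv⟩ := exists_seq_of_mem_omegaLimit hy
  have hmem : y ∈ closure (A ω₁ ω₂) := by
    rw [EMetric.mem_closure_iff_infEdist_zero]
    refine infEdist_eq_zero_forall fun ε hε => ?_
    have h1 : ∀ᶠ n in atTop, hausSemidist
        (Φ (t n) (θ₁ (-t n) ω₁) (θ₂ (-t n) ω₂) '' B (θ₁ (-t n) ω₁) (θ₂ (-t n) ω₂))
        (A ω₁ ω₂) ≤ ε / 2 :=
      (ENNReal.tendsto_nhds_zero.1 ((hatt ω₁ ω₂).comp (tendsto_t_atTop htn))) (ε / 2)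
        (ENNReal.half_pos hε.ne')
    have h2 : ∀ᶠ n in atTop,
        Φ (t n) (θ₁ (-t n) ω₁) (θ₂ (-t n) ω₂) (x n) ∈ EMetric.ball y (ε / 2) :=
      hconv (EMetric.ball_mem_nhds y (ENNReal.half_pos hε.ne'))
    obtain ⟨n, hn1, hn2⟩ := (h1.and h2).exists
    calc EMetric.infEdist y (A ω₁ ω₂)
        ≤ edist y (Φ (t n) (θ₁ (-t n) ω₁) (θ₂ (-t n) ω₂) (x n))
          + EMetric.infEdist (Φ (t n) (θ₁ (-t n) ω₁) (θ₂ (-t n) ω₂) (x n)) (A ω₁ ω₂) :=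
        EMetric.infEdist_le_edist_add_infEdist
      _ ≤ ε / 2 + ε / 2 := by
          refine add_le_add ?_ (le_trans (le_hausSemidist (Set.mem_image_of_mem _ (hxB n))) hn1)
          rw [edist_comm]
          exact (EMetric.mem_ball.1 hn2).le
      _ = ε := ENNReal.add_halves ε
  rwa [(hAcl ω₁ ω₂).closure_eq] at hmem

theorem attractor_subset_omegaLimit_self (hθ₁ : IsGroupAction θ₁) (hθ₂ : IsGroupAction θ₂)
    {A : Ω₁ → Ω₂ → Set X} (hInv : Invariant θ₁ θ₂ Φ A) (ω₁ : Ω₁) (ω₂ : Ω₂) :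
    A ω₁ ω₂ ⊆ omegaLimit θ₁ θ₂ Φ A ω₁ ω₂ := by
  intro y hy
  rw [omegaLimit_eq]
  refine Set.mem_iInter₂.2 fun τ hτ => ?_
  refine subset_closure (Set.mem_biUnion Set.self_mem_Ici ?_)
  rw [pull_invariant hθ₁ hθ₂ hInv hτ]
  exact hy

theorem attractor_subset_omegaLimit_absorbing (hθ₁ : IsGroupAction θ₁)
    (hθ₂ : IsGroupAction θ₂) (hΦ : IsCocycle θ₁ θ₂ Φ) {A K : Ω₁ → Ω₂ → Set X}
    (hInv : Invariant θ₁ θ₂ Φ A) (hA𝒟 : A ∈ 𝒟) (hK : IsAbsorbingSet θ₁ θ₂ Φ 𝒟 K)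
    (ω₁ : Ω₁) (ω₂ : Ω₂) : A ω₁ ω₂ ⊆ omegaLimit θ₁ θ₂ Φ K ω₁ ω₂ := by
  intro y hy
  rw [omegaLimit_eq]
  refine Set.mem_iInter₂.2 fun τ hτ => ?_
  obtain ⟨T, hT, habs⟩ := hK.2 (θ₁ (-τ) ω₁) (θ₂ (-τ) ω₂) A hA𝒟
  refine subset_closure (Set.mem_biUnion Set.self_mem_Ici ?_)
  have h1 : A ω₁ ω₂ = Φ τ (θ₁ (-τ) ω₁) (θ₂ (-τ) ω₂) ''
      pull θ₁ θ₂ Φ A T (θ₁ (-τ) ω₁) (θ₂ (-τ) ω₂) := by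
    rw [← pull_add hθ₁ hθ₂ hΦ A hτ hT.le, pull_invariant hθ₁ hθ₂ hInv (add_nonneg hτ hT.le)]
  rw [h1] at hy
  obtain ⟨z, hz, rfl⟩ := hy
  exact ⟨z, habs T le_rfl hz, rfl⟩

theorem attractor_unique (hθ₁ : IsGroupAction θ₁) (hθ₂ : IsGroupAction θ₂)
    {P : Measure Ω₂} {A A' : Ω₁ → Ω₂ → Set X}
    (hA : IsPullbackAttractor θ₁ θ₂ Φ P 𝒟 A) (hA' : IsPullbackAttractor θ₁ θ₂ Φ P 𝒟 A') :
    ∀ (ω₁ : Ω₁) (ω₂ : Ω₂), A' ω₁ ω₂ ⊆ A ω₁ ω₂ := by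
  intro ω₁ ω₂
  have h1 : Tendsto (fun t : ℝ => hausSemidist
      (pull θ₁ θ₂ Φ A' t ω₁ ω₂) (A ω₁ ω₂)) atTop (𝓝 0) := hA.attracts A' hA'.mem ω₁ ω₂
  have h2 : (fun t : ℝ => hausSemidist (pull θ₁ θ₂ Φ A' t ω₁ ω₂) (A ω₁ ω₂))
      =ᶠ[atTop] fun _ => hausSemidist (A' ω₁ ω₂) (A ω₁ ω₂) := by
    filter_upwards [eventually_ge_atTop (0 : ℝ)] with t ht
    rw [pull_invariant hθ₁ hθ₂ hA'.invariant ht]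
  have h3 : hausSemidist (A' ω₁ ω₂) (A ω₁ ω₂) = 0 :=
    tendsto_nhds_unique tendsto_const_nhds (h1.congr' h2)
  intro z hz
  have h4 : EMetric.infEdist z (A ω₁ ω₂) = 0 :=
    le_antisymm (h3 ▸ le_hausSemidist hz) zero_le
  have h5 := EMetric.mem_closure_iff_infEdist_zero.2 h4
  rwa [(hA.compact ω₁ ω₂).isClosed.closure_eq] at h5

theorem psi0_mem_attractor {A : Ω₁ → Ω₂ → Set X}
    (hAcl : ∀ a b, IsClosed (A a b)) {ψ : ℝ → Ω₁ → Ω₂ → X}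
    (hψ : IsCompleteOrbit θ₁ θ₂ Φ ψ) {D : Ω₁ → Ω₂ → Set X}
    (hD : ∀ (t : ℝ) (a : Ω₁) (b : Ω₂), ψ t a b ∈ D (θ₁ t a) (θ₂ t b))
    (hatt : Attracts θ₁ θ₂ Φ D A) (ω₁ : Ω₁) (ω₂ : Ω₂) :
    ψ 0 ω₁ ω₂ ∈ A ω₁ ω₂ := by
  have hmem : ∀ t : ℝ, 0 ≤ t → ψ 0 ω₁ ω₂ ∈ pull θ₁ θ₂ Φ D t ω₁ ω₂ := by
    intro t ht
    have h := hψ t (-t) ht ω₁ ω₂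
    rw [add_neg_cancel] at h
    exact ⟨ψ (-t) ω₁ ω₂, hD (-t) ω₁ ω₂, h⟩
  have h0 : ψ 0 ω₁ ω₂ ∈ closure (A ω₁ ω₂) := by
    rw [EMetric.mem_closure_iff_infEdist_zero]
    refine infEdist_eq_zero_forall fun ε hε => ?_
    have h1 : ∀ᶠ t : ℝ in atTop,
        hausSemidist (pull θ₁ θ₂ Φ D t ω₁ ω₂) (A ω₁ ω₂) ≤ ε :=
      (ENNReal.tendsto_nhds_zero.1 (hatt ω₁ ω₂)) ε hε
    obtain ⟨t, ht1, ht0⟩ := (h1.and (eventually_ge_atTop (0 : ℝ))).exists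
    exact le_trans (le_hausSemidist (hmem t ht0)) ht1
  rwa [(hAcl ω₁ ω₂).closure_eq] at h0

theorem asymptoticallyCompact_of_attractor (h𝒟ne : FamiliesOfNonemptySets 𝒟)
    {P : Measure Ω₂} {A : Ω₁ → Ω₂ → Set X}
    (hA : IsPullbackAttractor θ₁ θ₂ Φ P 𝒟 A) : AsymptoticallyCompact θ₁ θ₂ Φ 𝒟 := by
  intro ω₁ ω₂ B hB t x ht hx
  set z : ℕ → X := fun n => Φ (t n) (θ₁ (-t n) ω₁) (θ₂ (-t n) ω₂) (x n) with hz
  have hAne : (A ω₁ ω₂).Nonempty := h𝒟ne A hA.mem ω₁ ω₂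
  have hfin : ∀ n, EMetric.infEdist (z n) (A ω₁ ω₂) ≠ ⊤ := fun n =>
    Metric.infEdist_ne_top hAne
  have hy : ∀ n : ℕ, ∃ y ∈ A ω₁ ω₂,
      edist (z n) y < EMetric.infEdist (z n) (A ω₁ ω₂) + ENNReal.ofReal (1 / (n + 1)) := by
    intro n
    refine EMetric.infEdist_lt_iff.mp ?_
    exact ENNReal.lt_add_right (hfin n)
      (ENNReal.ofReal_pos.2 (by positivity)).ne'
  choose y hyA hyd using hy
  obtain ⟨a, haA, φ, hφ, hconv⟩ := (hA.compact ω₁ ω₂).tendsto_subseq hyA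
  refine ⟨φ, a, hφ, ?_⟩
  have hH : Tendsto (fun n => hausSemidist (pull θ₁ θ₂ Φ B (t (φ n)) ω₁ ω₂) (A ω₁ ω₂))
      atTop (𝓝 0) := (hA.attracts B hB ω₁ ω₂).comp (ht.comp hφ.tendsto_atTop)
  have hofr : Tendsto (fun n : ℕ => ENNReal.ofReal (1 / ((φ n : ℝ) + 1))) atTop (𝓝 0) := by
    rw [show (0 : ℝ≥0∞) = ENNReal.ofReal 0 by simp]
    exact (ENNReal.continuous_ofReal.tendsto 0).comp
      (tendsto_one_div_add_atTop_nhds_zero_nat.comp hφ.tendsto_atTop)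
  have hedist : Tendsto (fun n => edist (z (φ n)) (y (φ n))) atTop (𝓝 0) := by
    have hub : ∀ n : ℕ, edist (z (φ n)) (y (φ n)) ≤
        hausSemidist (pull θ₁ θ₂ Φ B (t (φ n)) ω₁ ω₂) (A ω₁ ω₂)
          + ENNReal.ofReal (1 / ((φ n : ℝ) + 1)) := by
      intro n
      refine le_trans (hyd (φ n)).le (add_le_add ?_ le_rfl)
      exact le_hausSemidist ⟨x (φ n), hx (φ n), rfl⟩
    have hsum : Tendsto (fun n => hausSemidist (pull θ₁ θ₂ Φ B (t (φ n)) ω₁ ω₂) (A ω₁ ω₂)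
        + ENNReal.ofReal (1 / ((φ n : ℝ) + 1))) atTop (𝓝 0) := by
      have := hH.add hofr
      simpa using this
    exact tendsto_of_tendsto_of_tendsto_of_le_of_le' tendsto_const_nhds hsum
      (Filter.Eventually.of_forall fun n => zero_le)
      (Filter.Eventually.of_forall hub)
  have hdist1 : Tendsto (fun n => dist (z (φ n)) (y (φ n))) atTop (𝓝 0) := by
    have := (ENNReal.tendsto_toReal (by simp : (0 : ℝ≥0∞) ≠ ⊤)).comp hedist
    simpa [dist_edist, Function.comp_def] using this
  rw [show (fun n => Φ (t (φ n)) (θ₁ (-t (φ n)) ω₁) (θ₂ (-t (φ n)) ω₂) (x (φ n)))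
    = fun n => z (φ n) from rfl]
  rw [tendsto_iff_dist_tendsto_zero]
  refine squeeze_zero (fun n => dist_nonneg) (fun n => dist_triangle _ (y (φ n)) a) ?_
  have hdist2 : Tendsto (fun n => dist (y (φ n)) a) atTop (𝓝 0) :=
    tendsto_iff_dist_tendsto_zero.1 hconv
  simpa using hdist1.add hdist2

open Classical in
theorem exists_orbit_through (hθ₁ : IsGroupAction θ₁) (hθ₂ : IsGroupAction θ₂)
    (hΦ : IsCocycle θ₁ θ₂ Φ) {A : Ω₁ → Ω₂ → Set X} (hInv : Invariant θ₁ θ₂ Φ A)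
    (hA𝒟 : A ∈ 𝒟) (hne : ∀ a b, (A a b).Nonempty) (ω₁ : Ω₁) (ω₂ : Ω₂) {x : X}
    (hx : x ∈ A ω₁ ω₂) :
    ∃ ψ : ℝ → Ω₁ → Ω₂ → X, IsDCompleteOrbit θ₁ θ₂ Φ 𝒟 ψ ∧ ψ 0 ω₁ ω₂ = x := by
  -- one-step backward extension
  have back : ∀ (a : Ω₁) (b : Ω₂) (z : X), z ∈ A a b →
      ∃ z', z' ∈ A (θ₁ (-1) a) (θ₂ (-1) b) ∧ Φ 1 (θ₁ (-1) a) (θ₂ (-1) b) z' = z := by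
    intro a b z hz
    have h := hInv 1 zero_le_one (θ₁ (-1) a) (θ₂ (-1) b)
    rw [ga_cancel hθ₁, ga_cancel hθ₂] at h
    rw [← h] at hz
    obtain ⟨z', hz', he⟩ := hz
    exact ⟨z', hz', he⟩
  have bk : ∀ (a : Ω₁) (b : Ω₂), ∃ f : X → X, ∀ z, z ∈ A a b →
      f z ∈ A (θ₁ (-1) a) (θ₂ (-1) b) ∧ Φ 1 (θ₁ (-1) a) (θ₂ (-1) b) (f z) = z := by
    intro a b
    refine ⟨fun z => if h : z ∈ A a b then (back a b z h).choose else z, fun z hz => ?_⟩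
    dsimp only
    rw [dif_pos hz]
    exact (back a b z hz).choose_spec
  choose bkf hbkf using bk
  -- base point
  set x₀ : Ω₁ → Ω₂ → X := fun a b => if a = ω₁ ∧ b = ω₂ then x else (hne a b).choose
    with hx₀def
  have hx₀mem : ∀ a b, x₀ a b ∈ A a b := by
    intro a b
    simp only [hx₀def]
    split_ifs with h
    · rw [h.1, h.2]; exact hx
    · exact (hne a b).choose_spec
  have hx₀eq : x₀ ω₁ ω₂ = x := by simp [hx₀def]
  -- backward sequence
  set seq : Ω₁ → Ω₂ → ℕ → X := fun a b =>
    Nat.rec (x₀ a b) (fun n z => bkf (θ₁ (-(n : ℝ)) a) (θ₂ (-(n : ℝ)) b) z) with hseqdef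
  have hcast : ∀ (n : ℕ) (a : Ω₁), θ₁ (-1) (θ₁ (-(n : ℝ)) a) = θ₁ (-((n + 1 : ℕ) : ℝ)) a := by
    intro n a
    refine ga_eq hθ₁ ?_ a
    push_cast; ring
  have hcast2 : ∀ (n : ℕ) (b : Ω₂), θ₂ (-1) (θ₂ (-(n : ℝ)) b) = θ₂ (-((n + 1 : ℕ) : ℝ)) b := by
    intro n b
    refine ga_eq hθ₂ ?_ b
    push_cast; ring
  have hseq0 : ∀ a b, seq a b 0 = x₀ a b := fun a b => rfl
  have hseqmem : ∀ a b (n : ℕ), seq a b n ∈ A (θ₁ (-(n : ℝ)) a) (θ₂ (-(n : ℝ)) b) := by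
    intro a b n
    induction n with
    | zero => simpa [hθ₁.1, hθ₂.1, hseq0] using hx₀mem a b
    | succ n ih =>
      have h := (hbkf (θ₁ (-(n : ℝ)) a) (θ₂ (-(n : ℝ)) b) (seq a b n) ih).1
      rwa [hcast, hcast2] at h
  have hseqstep : ∀ a b (n : ℕ),
      Φ 1 (θ₁ (-((n + 1 : ℕ) : ℝ)) a) (θ₂ (-((n + 1 : ℕ) : ℝ)) b) (seq a b (n + 1))
        = seq a b n := by
    intro a b n
    have h := (hbkf (θ₁ (-(n : ℝ)) a) (θ₂ (-(n : ℝ)) b) (seq a b n) (hseqmem a b n)).2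
    rwa [hcast, hcast2] at h
  -- consistency across levels
  have hcons : ∀ (k : ℕ) (n : ℕ) (s : ℝ), 0 ≤ s → ∀ a b,
      Φ (s + (k : ℝ)) (θ₁ (-((n + k : ℕ) : ℝ)) a) (θ₂ (-((n + k : ℕ) : ℝ)) b)
        (seq a b (n + k))
      = Φ s (θ₁ (-(n : ℝ)) a) (θ₂ (-(n : ℝ)) b) (seq a b n) := by
    intro k
    induction k with
    | zero => intro n s hs a b; simp
    | succ k ih =>
      intro n s hs a b
      have h2 : (0 : ℝ) ≤ s + (k : ℝ) := by positivity
      have hc := hΦ.cocycle (s + (k : ℝ)) 1 h2 zero_le_one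
        (θ₁ (-((n + k + 1 : ℕ) : ℝ)) a) (θ₂ (-((n + k + 1 : ℕ) : ℝ)) b)
        (seq a b (n + k + 1))
      have e1 : θ₁ 1 (θ₁ (-((n + k + 1 : ℕ) : ℝ)) a) = θ₁ (-((n + k : ℕ) : ℝ)) a := by
        refine ga_eq hθ₁ ?_ a; push_cast; ring
      have e2 : θ₂ 1 (θ₂ (-((n + k + 1 : ℕ) : ℝ)) b) = θ₂ (-((n + k : ℕ) : ℝ)) b := by
        refine ga_eq hθ₂ ?_ b; push_cast; ring
      rw [e1, e2, hseqstep a b (n + k)] at hc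
      have g1 : s + ((k + 1 : ℕ) : ℝ) = s + (k : ℝ) + 1 := by push_cast; ring
      show Φ (s + ((k + 1 : ℕ) : ℝ)) (θ₁ (-((n + k + 1 : ℕ) : ℝ)) a)
          (θ₂ (-((n + k + 1 : ℕ) : ℝ)) b) (seq a b (n + k + 1))
        = Φ s (θ₁ (-(n : ℝ)) a) (θ₂ (-(n : ℝ)) b) (seq a b n)
      rw [g1, hc]
      exact ih n s hs a b
  -- the orbit
  set nt : ℝ → ℕ := fun τ => ⌈-τ⌉₊ with hnt
  have hntle : ∀ τ : ℝ, -τ ≤ (nt τ : ℝ) := fun τ => Nat.le_ceil (-τ)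
  set ψ : ℝ → Ω₁ → Ω₂ → X := fun τ a b =>
    Φ (τ + (nt τ : ℝ)) (θ₁ (-(nt τ : ℝ)) a) (θ₂ (-(nt τ : ℝ)) b) (seq a b (nt τ))
    with hψdef
  have hψeq : ∀ (τ : ℝ) (m : ℕ) (a b), -τ ≤ (m : ℝ) →
      ψ τ a b = Φ (τ + (m : ℝ)) (θ₁ (-(m : ℝ)) a) (θ₂ (-(m : ℝ)) b) (seq a b m) := by
    intro τ m a b hm
    have key : ∀ (p : ℕ), -τ ≤ (p : ℝ) → ∀ q : ℕ,
        Φ (τ + ((p + q : ℕ) : ℝ)) (θ₁ (-((p + q : ℕ) : ℝ)) a) (θ₂ (-((p + q : ℕ) : ℝ)) b)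
          (seq a b (p + q))
        = Φ (τ + (p : ℝ)) (θ₁ (-(p : ℝ)) a) (θ₂ (-(p : ℝ)) b) (seq a b p) := by
      intro p hp q
      have h0 : (0 : ℝ) ≤ τ + p := by linarith
      have := hcons q p (τ + (p : ℝ)) h0 a b
      have harg : (τ + (p : ℝ)) + (q : ℝ) = τ + ((p + q : ℕ) : ℝ) := by push_cast; ring
      rwa [harg] at this
    have h1 := key (nt τ) (hntle τ) (max (nt τ) m - nt τ)
    have h2 := key m hm (max (nt τ) m - m)
    rw [Nat.add_sub_cancel' (le_max_left _ _)] at h1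
    rw [Nat.add_sub_cancel' (le_max_right _ _)] at h2
    rw [hψdef]
    simp only
    rw [← h1, h2]
  have horbit : IsCompleteOrbit θ₁ θ₂ Φ ψ := by
    intro t τ ht a b
    set m : ℕ := max (nt τ) (nt (t + τ)) with hm
    have hm1 : -τ ≤ (m : ℝ) :=
      le_trans (hntle τ) (Nat.cast_le.2 (le_max_left _ _))
    have hm2 : -(t + τ) ≤ (m : ℝ) :=
      le_trans (hntle (t + τ)) (Nat.cast_le.2 (le_max_right _ _))
    rw [hψeq τ m a b hm1, hψeq (t + τ) m a b hm2]
    have h0 : (0 : ℝ) ≤ τ + m := by linarith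
    have hc := hΦ.cocycle t (τ + (m : ℝ)) ht h0
      (θ₁ (-(m : ℝ)) a) (θ₂ (-(m : ℝ)) b) (seq a b m)
    have e1 : θ₁ (τ + (m : ℝ)) (θ₁ (-(m : ℝ)) a) = θ₁ τ a := ga_eq hθ₁ (by ring) a
    have e2 : θ₂ (τ + (m : ℝ)) (θ₂ (-(m : ℝ)) b) = θ₂ τ b := ga_eq hθ₂ (by ring) b
    rw [e1, e2] at hc
    rw [← hc]
    congr 1
    ring
  have hψmem : ∀ (τ : ℝ) (a b), ψ τ a b ∈ A (θ₁ τ a) (θ₂ τ b) := by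
    intro τ a b
    rw [hψdef]
    simp only
    have h0 : (0 : ℝ) ≤ τ + (nt τ : ℝ) := by have := hntle τ; linarith
    have h := hInv (τ + (nt τ : ℝ)) h0 (θ₁ (-(nt τ : ℝ)) a) (θ₂ (-(nt τ : ℝ)) b)
    have e1 : θ₁ (τ + (nt τ : ℝ)) (θ₁ (-(nt τ : ℝ)) a) = θ₁ τ a := ga_eq hθ₁ (by ring) a
    have e2 : θ₂ (τ + (nt τ : ℝ)) (θ₂ (-(nt τ : ℝ)) b) = θ₂ τ b := ga_eq hθ₂ (by ring) b
    rw [e1, e2] at h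
    rw [← h]
    exact Set.mem_image_of_mem _ (hseqmem a b (nt τ))
  have hψ0 : ψ 0 ω₁ ω₂ = x := by
    have hnt0 : nt 0 = 0 := by simp [hnt]
    rw [hψdef]
    simp only [hnt0, Nat.cast_zero, add_zero, neg_zero, hθ₁.1, hθ₂.1]
    rw [hΦ.map_zero, hseq0, hx₀eq]
  exact ⟨ψ, ⟨horbit, A, hA𝒟, fun t a b => hψmem t a b⟩, hψ0⟩

/-- Closure of the set of points of a dense sequence lying `η`-close to `S`. -/
def dSel (u : ℕ → X) (S : Set X) (η : ℝ) : Set X :=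
  closure (⋃ i ∈ {i : ℕ | Metric.infDist (u i) S ≤ η}, {u i})

theorem isClosed_dSel (u : ℕ → X) (S : Set X) (η : ℝ) : IsClosed (dSel u S η) :=
  isClosed_closure

theorem mem_dSel_of_infDist_le {u : ℕ → X} (hu : DenseRange u) {S : Set X} {η δ : ℝ}
    (hδη : δ < η) {z : X} (hz : Metric.infDist z S ≤ δ) : z ∈ dSel u S η := by
  rw [dSel, Metric.mem_closure_iff]
  intro r hr
  obtain ⟨i, hi⟩ := hu.exists_dist_lt z (lt_min hr (sub_pos.2 hδη))
  refine ⟨u i, ?_, ?_⟩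
  · refine Set.mem_biUnion ?_ rfl
    have h1 : Metric.infDist (u i) S ≤ Metric.infDist z S + dist (u i) z :=
      Metric.infDist_le_infDist_add_dist
    have h2 : dist (u i) z < η - δ := by
      rw [dist_comm]; exact lt_of_lt_of_le hi (min_le_right _ _)
    simp only [Set.mem_setOf_eq]
    linarith
  · rw [dist_comm] at hi ⊢
    exact lt_of_lt_of_le hi (min_le_left _ _)

theorem subset_dSel {u : ℕ → X} (hu : DenseRange u) {S : Set X} {η : ℝ} (hη : 0 < η) :
    S ⊆ dSel u S η := fun z hz =>
  mem_dSel_of_infDist_le hu hη (le_of_eq (Metric.infDist_zero_of_mem hz))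

theorem dSel_subset_cthickening {u : ℕ → X} {S : Set X} (hS : S.Nonempty) {η : ℝ}
    (hη : 0 ≤ η) : dSel u S η ⊆ Metric.cthickening η S := by
  refine closure_minimal ?_ Metric.isClosed_cthickening
  refine Set.iUnion₂_subset fun i hi => ?_
  rw [Set.singleton_subset_iff, Metric.mem_cthickening_iff]
  rw [ENNReal.le_ofReal_iff_toReal_le (Metric.infEdist_ne_top hS) hη]
  exact hi

open Classical in
theorem infEdist_biUnion_singleton (v : ℕ → X) (Q : ℕ → Prop) (x : X) :
    EMetric.infEdist x (⋃ i ∈ {i : ℕ | Q i}, ({v i} : Set X))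
      = ⨅ i : ℕ, if Q i then edist x (v i) else ⊤ := by
  rw [EMetric.infEdist, EMetric.infEdist_biUnion]
  refine iInf_congr fun i => ?_
  rw [← iInf_eq_if]
  exact iInf_congr fun _ => EMetric.infEdist_singleton

open Classical in
theorem infEdist_dSel (u : ℕ → X) (S : Set X) (η : ℝ) (x : X) :
    EMetric.infEdist x (dSel u S η)
      = ⨅ i : ℕ, if Metric.infDist (u i) S ≤ η then edist x (u i) else ⊤ := by
  rw [dSel, EMetric.infEdist, EMetric.infEdist_closure]
  exact infEdist_biUnion_singleton u _ x

open Classical in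
theorem infEdist_image_dSel {u : ℕ → X} {S : Set X} {η : ℝ} {f : X → X}
    (hf : Continuous f) (x : X) :
    EMetric.infEdist x (f '' dSel u S η)
      = ⨅ i : ℕ, if Metric.infDist (u i) S ≤ η then edist x (f (u i)) else ⊤ := by
  set T := ⋃ i ∈ {i : ℕ | Metric.infDist (u i) S ≤ η}, ({u i} : Set X) with hT
  have h1 : EMetric.infEdist x (f '' dSel u S η) = EMetric.infEdist x (f '' T) := by
    refine le_antisymm ?_ ?_
    · exact EMetric.infEdist_anti (Set.image_mono subset_closure)
    · calc EMetric.infEdist x (f '' T) = EMetric.infEdist x (closure (f '' T)) :=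
          (EMetric.infEdist_closure).symm
        _ ≤ EMetric.infEdist x (f '' closure T) :=
          EMetric.infEdist_anti (image_closure_subset_closure_image hf)
  rw [h1, hT]
  have h2 : f '' (⋃ i ∈ {i : ℕ | Metric.infDist (u i) S ≤ η}, ({u i} : Set X))
      = ⋃ i ∈ {i : ℕ | Metric.infDist (u i) S ≤ η}, ({f (u i)} : Set X) := by
    rw [Set.image_iUnion₂]
    simp
  rw [h2]
  exact infEdist_biUnion_singleton (fun i => f (u i)) _ x

open Classical in
theorem aemeasurable_iInf_ite {P : Measure Ω₂} (c : ℕ → Set Ω₂)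
    (hc : ∀ i, NullMeasurableSet (c i) P) (g : ℕ → Ω₂ → ℝ≥0∞)
    (hg : ∀ i, AEMeasurable (g i) P) :
    AEMeasurable (fun ω => ⨅ i : ℕ, if ω ∈ c i then g i ω else ⊤) P := by
  refine AEMeasurable.iInf fun i => ?_
  obtain ⟨t, ht, hts⟩ := hc i
  obtain ⟨G, hG, hGg⟩ := hg i
  refine ⟨fun ω => if ω ∈ t then G ω else ⊤, Measurable.ite ht hG measurable_const, ?_⟩
  filter_upwards [hts, hGg] with ω h1 h2
  have hiff : ω ∈ c i ↔ ω ∈ t := iff_of_eq h1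
  by_cases hm : ω ∈ c i
  · rw [if_pos hm, if_pos (hiff.1 hm), h2]
  · rw [if_neg hm, if_neg (fun hh => hm (hiff.2 hh))]

end Aux

section Main

variable {Ω₁ Ω₂ X : Type*} [MetricSpace X] [SecondCountableTopology X]
  [MeasurableSpace X] [BorelSpace X] [MeasurableSpace Ω₂]
variable {θ₁ : ℝ → Ω₁ → Ω₁} {θ₂ : ℝ → Ω₂ → Ω₂} {Φ : ℝ → Ω₁ → Ω₂ → X → X}
variable {𝒟 : Set (Ω₁ → Ω₂ → Set X)} {P : Measure Ω₂}

set_option linter.unusedSectionVars false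

theorem isPullbackAttractor_of_AC [Nonempty X]
    (hθ₁ : IsGroupAction θ₁) (hθ₂ : IsGroupAction θ₂)
    (hθ₂pres : ∀ t : ℝ, MeasurePreserving (θ₂ t) P P)
    (hΦ : IsCocycle θ₁ θ₂ Φ) (h𝒟ne : FamiliesOfNonemptySets 𝒟)
    (h𝒟nc : NeighborhoodClosed 𝒟) (hAC : AsymptoticallyCompact θ₁ θ₂ Φ 𝒟)
    {K : Ω₁ → Ω₂ → Set X} (hK : IsClosedMeasurableAbsorbingSet θ₁ θ₂ Φ P 𝒟 K) :
    ∃ A : Ω₁ → Ω₂ → Set X, IsPullbackAttractor θ₁ θ₂ Φ P 𝒟 A := by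
  classical
  obtain ⟨hKabs, hKclne, hKmeas⟩ := hK
  obtain ⟨ε, hε, hclosed⟩ := h𝒟nc K hKabs.1
  set u : ℕ → X := TopologicalSpace.denseSeq X with hu_def
  have hu : DenseRange u := TopologicalSpace.denseRange_denseSeq X
  set η : ℝ := ε / 2 with hη_def
  have hη : 0 < η := by positivity
  set K' : Ω₁ → Ω₂ → Set X := fun a b => dSel u (K a b) η with hK'def
  have hK'sub : ∀ a b, K' a b ⊆ Metric.thickening ε (K a b) := fun a b =>
    (dSel_subset_cthickening (hKclne a b).2 hη.le).trans
      (Metric.cthickening_subset_thickening' hε (by simp only [hη_def]; linarith) _)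
  have hKsubK' : ∀ a b, K a b ⊆ K' a b := fun a b => subset_dSel hu hη
  have hK'𝒟 : K' ∈ 𝒟 := hclosed K' fun a b =>
    ⟨(hKclne a b).2.mono (hKsubK' a b), hK'sub a b⟩
  have hK'abs : IsAbsorbingSet θ₁ θ₂ Φ 𝒟 K' := by
    refine ⟨hK'𝒟, fun ω₁ ω₂ B hB => ?_⟩
    obtain ⟨T, hT, h⟩ := hKabs.2 ω₁ ω₂ B hB
    exact ⟨T, hT, fun t ht => (h t ht).trans (hKsubK' _ _)⟩
  have hK'cl : ∀ a b, IsClosed (K' a b) := fun a b => isClosed_dSel u _ η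
  set A : Ω₁ → Ω₂ → Set X := fun a b => omegaLimit θ₁ θ₂ Φ K' a b with hAdef
  have hAcomp : ∀ a b, IsCompact (A a b) := fun a b => isCompact_omegaLimit hAC hK'𝒟 a b
  have hAne : ∀ a b, (A a b).Nonempty := fun a b => omegaLimit_nonempty h𝒟ne hAC hK'𝒟 a b
  have hAsubK' : ∀ a b, A a b ⊆ K' a b := fun a b =>
    omegaLimit_subset_absorbing hK'abs (hK'cl a b)
  have hA𝒟 : A ∈ 𝒟 := hclosed A fun a b =>
    ⟨hAne a b, (hAsubK' a b).trans (hK'sub a b)⟩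
  have hAinv : Invariant θ₁ θ₂ Φ A := invariant_omegaLimit hθ₁ hθ₂ hΦ hAC hK'𝒟
  have hAatt : ∀ B ∈ 𝒟, Attracts θ₁ θ₂ Φ B A := fun B hB =>
    attracts_omegaLimit hθ₁ hθ₂ hΦ hAC hK'abs hB
  -- measurability
  have key : ∀ (ω₁ : Ω₁) (x : X),
      AEMeasurable (fun ω₂ => EMetric.infEdist x (A ω₁ ω₂)) P := by
    intro ω₁ x
    set f : ℕ → Ω₂ → ℝ≥0∞ := fun n ω₂ =>
      EMetric.infEdist x (pull θ₁ θ₂ Φ K' ((n : ℕ) : ℝ) ω₁ ω₂) with hfdef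
    have hf_meas : ∀ n : ℕ, AEMeasurable (f n) P := by
      intro n
      have hform : ∀ ω₂ : Ω₂, f n ω₂ = ⨅ i : ℕ,
          if ω₂ ∈ {b : Ω₂ | Metric.infDist (u i)
              (K (θ₁ (-((n : ℕ) : ℝ)) ω₁) (θ₂ (-((n : ℕ) : ℝ)) b)) ≤ η}
          then edist x (Φ ((n : ℕ) : ℝ) (θ₁ (-((n : ℕ) : ℝ)) ω₁)
            (θ₂ (-((n : ℕ) : ℝ)) ω₂) (u i)) else ⊤ := by
        intro ω₂
        exact infEdist_image_dSel
          (hΦ.continuous _ (Nat.cast_nonneg n) _ _) x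
      have := aemeasurable_iInf_ite (P := P)
        (c := fun i => {b : Ω₂ | Metric.infDist (u i)
          (K (θ₁ (-((n : ℕ) : ℝ)) ω₁) (θ₂ (-((n : ℕ) : ℝ)) b)) ≤ η})
        (fun i => ?_)
        (g := fun i ω₂ => edist x (Φ ((n : ℕ) : ℝ) (θ₁ (-((n : ℕ) : ℝ)) ω₁)
          (θ₂ (-((n : ℕ) : ℝ)) ω₂) (u i)))
        (fun i => ?_)
      · refine AEMeasurable.congr this ?_
        exact Filter.Eventually.of_forall fun ω₂ => (hform ω₂).symm
      · -- null measurable condition set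
        have h1 : AEMeasurable
            (fun b => Metric.infDist (u i) (K (θ₁ (-((n : ℕ) : ℝ)) ω₁) b)) P :=
          (hKmeas _ (u i)).aemeasurable
        have h2 : AEMeasurable (fun ω₂ => Metric.infDist (u i)
            (K (θ₁ (-((n : ℕ) : ℝ)) ω₁) (θ₂ (-((n : ℕ) : ℝ)) ω₂))) P :=
          h1.comp_quasiMeasurePreserving (hθ₂pres _).quasiMeasurePreserving
        exact h2.nullMeasurable measurableSet_Iic
      · -- measurable value function
        have hm1 : Measurable (θ₂ (-((n : ℕ) : ℝ))) := (hθ₂pres _).measurable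
        have hm2 : Measurable (fun b : Ω₂ =>
            Φ ((n : ℕ) : ℝ) (θ₁ (-((n : ℕ) : ℝ)) ω₁) b (u i)) := by
          have hΦm := hΦ.measurable (θ₁ (-((n : ℕ) : ℝ)) ω₁)
          exact hΦm.comp ((measurable_const (a := (⟨((n : ℕ) : ℝ), Nat.cast_nonneg n⟩ :
            {t : ℝ // 0 ≤ t}))).prodMk (measurable_id.prodMk measurable_const))
        have hce : Continuous fun y : X => edist x y := continuous_const.edist continuous_id
        exact (hce.measurable.comp (hm2.comp hm1)).aemeasurable
    have hlim : ∀ ω₂ : Ω₂, Tendsto (fun n : ℕ => f n ω₂) atTop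
        (𝓝 (EMetric.infEdist x (A ω₁ ω₂))) := by
      intro ω₂
      have hup : ∀ n : ℕ, f n ω₂ ≤ EMetric.infEdist x (A ω₁ ω₂) := by
        intro n
        refine EMetric.infEdist_anti ?_
        have h1 : A ω₁ ω₂ = pull θ₁ θ₂ Φ A ((n : ℕ) : ℝ) ω₁ ω₂ :=
          (pull_invariant hθ₁ hθ₂ hAinv (Nat.cast_nonneg n) ω₁ ω₂).symm
        rw [h1]
        exact Set.image_mono (hAsubK' _ _)
      set H : ℕ → ℝ≥0∞ := fun n =>
        hausSemidist (pull θ₁ θ₂ Φ K' ((n : ℕ) : ℝ) ω₁ ω₂) (A ω₁ ω₂) with hHdef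
      have hlow : ∀ n : ℕ, EMetric.infEdist x (A ω₁ ω₂) - H n ≤ f n ω₂ := by
        intro n
        rw [tsub_le_iff_right]
        by_cases hb : f n ω₂ + H n = ⊤
        · rw [hb]; exact le_top
        refine ENNReal.le_of_forall_pos_le_add fun δ hδ _ => ?_
        have hfin : f n ω₂ ≠ ⊤ := fun h => hb (by simp [h])
        have hlt : f n ω₂ < f n ω₂ + δ :=
          ENNReal.lt_add_right hfin (by exact_mod_cast hδ.ne')
        obtain ⟨z, hzC, hzd⟩ := EMetric.infEdist_lt_iff.mp hlt
        calc EMetric.infEdist x (A ω₁ ω₂)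
            ≤ edist x z + EMetric.infEdist z (A ω₁ ω₂) :=
            EMetric.infEdist_le_edist_add_infEdist
          _ ≤ (f n ω₂ + δ) + H n := add_le_add hzd.le (le_hausSemidist hzC)
          _ = f n ω₂ + H n + δ := by ring
      have hH : Tendsto H atTop (𝓝 0) :=
        (hAatt K' hK'𝒟 ω₁ ω₂).comp tendsto_natCast_atTop_atTop
      have hlow' : Tendsto (fun n => EMetric.infEdist x (A ω₁ ω₂) - H n) atTop
          (𝓝 (EMetric.infEdist x (A ω₁ ω₂))) := by
        have hconst : Tendsto (fun _ : ℕ => EMetric.infEdist x (A ω₁ ω₂)) atTop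
            (𝓝 (EMetric.infEdist x (A ω₁ ω₂))) := tendsto_const_nhds
        have h := ENNReal.Tendsto.sub hconst hH (Or.inr (by simp))
        simpa using h
      exact tendsto_of_tendsto_of_tendsto_of_le_of_le hlow' tendsto_const_nhds hlow hup
    exact aemeasurable_of_tendsto_metrizable_ae' hf_meas
      (Filter.Eventually.of_forall hlim)
  have hmeas : ∀ (ω₁ : Ω₁) (x : X),
      NullMeasurable (fun ω₂ => Metric.infDist x (A ω₁ ω₂)) P := by
    intro ω₁ x
    have h1 : (fun ω₂ => Metric.infDist x (A ω₁ ω₂))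
        = fun ω₂ => (EMetric.infEdist x (A ω₁ ω₂)).toReal := rfl
    rw [h1]
    exact (ENNReal.measurable_toReal.comp_aemeasurable (key ω₁ x)).nullMeasurable
  exact ⟨A, hA𝒟, hAcomp, hmeas, hAinv, hAatt⟩

theorem exists_absorbing_of_attractor [Nonempty X] (h𝒟ne : FamiliesOfNonemptySets 𝒟)
    (h𝒟nc : NeighborhoodClosed 𝒟) {A : Ω₁ → Ω₂ → Set X}
    (hA : IsPullbackAttractor θ₁ θ₂ Φ P 𝒟 A) :
    ∃ K : Ω₁ → Ω₂ → Set X, IsClosedMeasurableAbsorbingSet θ₁ θ₂ Φ P 𝒟 K := by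
  classical
  obtain ⟨ε, hε, hclosed⟩ := h𝒟nc A hA.mem
  set u : ℕ → X := TopologicalSpace.denseSeq X with hu_def
  have hu : DenseRange u := TopologicalSpace.denseRange_denseSeq X
  set η : ℝ := ε / 2 with hη_def
  have hη : 0 < η := by positivity
  set K : Ω₁ → Ω₂ → Set X := fun a b => dSel u (A a b) η with hKdef
  have hAne : ∀ a b, (A a b).Nonempty := fun a b => h𝒟ne A hA.mem a b
  have hAsubK : ∀ a b, A a b ⊆ K a b := fun a b => subset_dSel hu hη
  have hK𝒟 : K ∈ 𝒟 := hclosed K fun a b =>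
    ⟨(hAne a b).mono (hAsubK a b), (dSel_subset_cthickening (hAne a b) hη.le).trans
      (Metric.cthickening_subset_thickening' hε (by simp only [hη_def]; linarith) _)⟩
  refine ⟨K, ⟨hK𝒟, ?_⟩, fun a b => ⟨isClosed_dSel u _ η, (hAne a b).mono (hAsubK a b)⟩, ?_⟩
  · -- absorbing
    intro ω₁ ω₂ B hB
    have hev : ∀ᶠ t : ℝ in atTop, hausSemidist
        (Φ t (θ₁ (-t) ω₁) (θ₂ (-t) ω₂) '' B (θ₁ (-t) ω₁) (θ₂ (-t) ω₂)) (A ω₁ ω₂)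
          ≤ ENNReal.ofReal (η / 2) :=
      (ENNReal.tendsto_nhds_zero.1 (hA.attracts B hB ω₁ ω₂)) _
        (ENNReal.ofReal_pos.2 (by positivity))
    obtain ⟨T₀, hT₀⟩ := Filter.eventually_atTop.1 hev
    refine ⟨max T₀ 1, lt_of_lt_of_le one_pos (le_max_right _ _), fun t ht => ?_⟩
    intro z hz
    have h1 : EMetric.infEdist z (A ω₁ ω₂) ≤ ENNReal.ofReal (η / 2) :=
      le_trans (le_hausSemidist hz) (hT₀ t (le_trans (le_max_left _ _) ht))
    have h2 : Metric.infDist z (A ω₁ ω₂) ≤ η / 2 :=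
      ENNReal.toReal_le_of_le_ofReal (by positivity) h1
    exact mem_dSel_of_infDist_le hu (by linarith) h2
  · -- measurability
    intro ω₁ x
    have h1 : (fun ω₂ => Metric.infDist x (K ω₁ ω₂))
        = fun ω₂ => (⨅ i : ℕ, if ω₂ ∈ {b : Ω₂ | Metric.infDist (u i) (A ω₁ b) ≤ η}
            then edist x (u i) else ⊤).toReal := by
      funext ω₂
      rw [show Metric.infDist x (K ω₁ ω₂)
        = (EMetric.infEdist x (dSel u (A ω₁ ω₂) η)).toReal from rfl]
      rw [infEdist_dSel]
      simp only [Set.mem_setOf_eq]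
    rw [h1]
    have h2 := aemeasurable_iInf_ite (P := P)
      (c := fun i => {b : Ω₂ | Metric.infDist (u i) (A ω₁ b) ≤ η})
      (fun i => (hA.measurable ω₁ (u i)).aemeasurable.nullMeasurable measurableSet_Iic)
      (g := fun i _ => edist x (u i)) (fun i => aemeasurable_const)
    exact (ENNReal.measurable_toReal.comp_aemeasurable h2).nullMeasurable

end Main



theorem attractor_existence_iff
    {Ω₁ Ω₂ X : Type*} [Nonempty Ω₁]
    [MetricSpace X] [CompleteSpace X] [SecondCountableTopology X]
    [MeasurableSpace X] [BorelSpace X]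
    [MeasurableSpace Ω₂] (P : Measure Ω₂) [IsProbabilityMeasure P]
    (θ₁ : ℝ → Ω₁ → Ω₁) (θ₂ : ℝ → Ω₂ → Ω₂)
    (hθ₁ : IsGroupAction θ₁) (hθ₂ : IsGroupAction θ₂)
    (hθ₂meas : Measurable fun p : ℝ × Ω₂ => θ₂ p.1 p.2)
    (hθ₂pres : ∀ t : ℝ, MeasurePreserving (θ₂ t) P P)
    (Φ : ℝ → Ω₁ → Ω₂ → X → X)
    (hΦ : IsCocycle θ₁ θ₂ Φ)
    (𝒟 : Set (Ω₁ → Ω₂ → Set X))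
    (h𝒟ne : FamiliesOfNonemptySets 𝒟)
    (h𝒟nc : NeighborhoodClosed 𝒟) :
    ((∃ A : Ω₁ → Ω₂ → Set X, IsPullbackAttractor θ₁ θ₂ Φ P 𝒟 A) ↔
      (AsymptoticallyCompact θ₁ θ₂ Φ 𝒟 ∧
        ∃ K : Ω₁ → Ω₂ → Set X, IsClosedMeasurableAbsorbingSet θ₁ θ₂ Φ P 𝒟 K)) ∧
    (∀ A A' : Ω₁ → Ω₂ → Set X, IsPullbackAttractor θ₁ θ₂ Φ P 𝒟 A →
      IsPullbackAttractor θ₁ θ₂ Φ P 𝒟 A' → A = A') ∧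
    (∀ A K : Ω₁ → Ω₂ → Set X, IsPullbackAttractor θ₁ θ₂ Φ P 𝒟 A →
      IsClosedMeasurableAbsorbingSet θ₁ θ₂ Φ P 𝒟 K →
      ∀ (ω₁ : Ω₁) (ω₂ : Ω₂),
        A ω₁ ω₂ = omegaLimit θ₁ θ₂ Φ K ω₁ ω₂ ∧
        A ω₁ ω₂ = ⋃ B ∈ 𝒟, omegaLimit θ₁ θ₂ Φ B ω₁ ω₂ ∧
        A ω₁ ω₂ = {x : X | ∃ ψ : ℝ → Ω₁ → Ω₂ → X,
          IsDCompleteOrbit θ₁ θ₂ Φ 𝒟 ψ ∧ ψ 0 ω₁ ω₂ = x}) := by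
  have hΩ₂ : Nonempty Ω₂ := by
    by_contra h
    rw [not_nonempty_iff] at h
    have h1 : P Set.univ = 1 := measure_univ
    rw [Set.univ_eq_empty_iff.2 h, measure_empty] at h1
    exact zero_ne_one h1
  obtain ⟨ω₁0⟩ := (inferInstance : Nonempty Ω₁)
  obtain ⟨ω₂0⟩ := hΩ₂
  refine ⟨⟨?_, ?_⟩, ?_, ?_⟩
  · -- attractor → AC ∧ absorbing
    rintro ⟨A, hA⟩
    haveI hX : Nonempty X := ⟨(h𝒟ne A hA.mem ω₁0 ω₂0).choose⟩
    exact ⟨asymptoticallyCompact_of_attractor h𝒟ne hA,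
      exists_absorbing_of_attractor h𝒟ne h𝒟nc hA⟩
  · -- AC ∧ absorbing → attractor
    rintro ⟨hAC, K, hK⟩
    haveI hX : Nonempty X := ⟨((hK.2.1 ω₁0 ω₂0).2).choose⟩
    exact isPullbackAttractor_of_AC hθ₁ hθ₂ hθ₂pres hΦ h𝒟ne h𝒟nc hAC hK
  · -- uniqueness
    intro A A' hA hA'
    funext a b
    exact Set.Subset.antisymm (attractor_unique hθ₁ hθ₂ hA' hA a b)
      (attractor_unique hθ₁ hθ₂ hA hA' a b)
  · -- characterizations
    intro A K hA hK ω₁ ω₂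
    have hAcl : ∀ (a : Ω₁) (b : Ω₂), IsClosed (A a b) := fun a b => (hA.compact a b).isClosed
    refine ⟨?_, ?_, ?_⟩
    · exact Set.Subset.antisymm
        (attractor_subset_omegaLimit_absorbing hθ₁ hθ₂ hΦ hA.invariant hA.mem hK.1 ω₁ ω₂)
        (omegaLimit_subset_of_attracts hAcl (hA.attracts K hK.1.1) ω₁ ω₂)
    · refine Set.Subset.antisymm ?_ ?_
      · exact fun y hy => Set.mem_biUnion hA.mem
          (attractor_subset_omegaLimit_self hθ₁ hθ₂ hA.invariant ω₁ ω₂ hy)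
      · exact Set.iUnion₂_subset fun B hB =>
          omegaLimit_subset_of_attracts hAcl (hA.attracts B hB) ω₁ ω₂
    · refine Set.Subset.antisymm ?_ ?_
      · intro x hx
        obtain ⟨ψ, hψ, hψ0⟩ := exists_orbit_through hθ₁ hθ₂ hΦ hA.invariant hA.mem
          (fun a b => h𝒟ne A hA.mem a b) ω₁ ω₂ hx
        exact ⟨ψ, hψ, hψ0⟩
      · rintro x ⟨ψ, ⟨horb, D, hD𝒟, hDmem⟩, rfl⟩
        exact psi0_mem_attractor hAcl horb hDmem (hA.attracts D hD𝒟) ω₁ ω₂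


end RDS
end
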